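/- The Franel numbers u_m = Σ_{k=0}^{m} C(m,k)^3 satisfy, for all m ≥ 1, the recurrence (m+1)^2 u_{m+1} - (7 m^2 + 7 m + 2) u_m - 8 m^2 u_{m-1} = 0, and (1)^2 u_1 = 2 u_0; that is, they satisfy the recurrence (m+1)^2 u_{m+1} - (A m^2 + A m + λ) u_m + B m^2 u_{m-1} = 0 with (A, B, λ) = (7, -8, 2). -/

import Mathlib

/-- Telescoping certificate for the Franel recurrence. -/
def franelG (n k : ℕ) : ℚ :=
  (Nat.choose (n + 2) k : ℚ) ^ 3 * (k : ℚ) ^ 3 *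
    (4 * (k : ℚ) ^ 3 - 6 * (3 * (n : ℚ) + 5) * (k : ℚ) ^ 2
      + 3 * ((n : ℚ) + 2) * (9 * (n : ℚ) + 13) * (k : ℚ)
      - 2 * ((n : ℚ) + 2) ^ 2 * (7 * (n : ℚ) + 9))
    / (((n : ℚ) + 1) * ((n : ℚ) + 2) ^ 3)

lemma franel_step (n k : ℕ) (hk : k ≤ n + 2) :
    ((n : ℚ) + 2) ^ 2 * (Nat.choose (n + 2) k : ℚ) ^ 3
      - (7 * (n : ℚ) ^ 2 + 21 * n + 16) * (Nat.choose (n + 1) k : ℚ) ^ 3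
      - 8 * ((n : ℚ) + 1) ^ 2 * (Nat.choose n k : ℚ) ^ 3
    = franelG n (k + 1) - franelG n k := by
  have hn1 : ((n : ℚ) + 1) ≠ 0 := by positivity
  have hn2 : ((n : ℚ) + 2) ≠ 0 := by positivity
  have hk1 : ((k : ℚ) + 1) ≠ 0 := by positivity
  by_cases hkn : k ≤ n
  · -- main case: all binomials nonzero
    have e1 : Nat.choose (n + 1) k * (n + 1 - k) = (n + 1) * Nat.choose n k := by
      rw [← Nat.choose_succ_right_eq]
      exact (Nat.add_one_mul_choose_eq n k).symm
    have e2 : Nat.choose (n + 2) k * (n + 2 - k) = (n + 2) * Nat.choose (n + 1) k := by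
      rw [← Nat.choose_succ_right_eq]
      exact (Nat.add_one_mul_choose_eq (n + 1) k).symm
    have e3 : Nat.choose (n + 2) (k + 1) * (k + 1)
        = Nat.choose (n + 2) k * (n + 2 - k) := Nat.choose_succ_right_eq (n + 2) k
    have hsub1 : ((n + 1 - k : ℕ) : ℚ) = (n : ℚ) + 1 - k := by
      push_cast [Nat.cast_sub (by omega : k ≤ n + 1)]; ring
    have hsub2 : ((n + 2 - k : ℕ) : ℚ) = (n : ℚ) + 2 - k := by
      push_cast [Nat.cast_sub (by omega : k ≤ n + 2)]; ring
    have q1 : (Nat.choose (n + 1) k : ℚ) * ((n : ℚ) + 1 - k)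
        = ((n : ℚ) + 1) * (Nat.choose n k : ℚ) := by
      have := congrArg (Nat.cast : ℕ → ℚ) e1
      push_cast [hsub1] at this
      linarith [this]
    have q2 : (Nat.choose (n + 2) k : ℚ) * ((n : ℚ) + 2 - k)
        = ((n : ℚ) + 2) * (Nat.choose (n + 1) k : ℚ) := by
      have := congrArg (Nat.cast : ℕ → ℚ) e2
      push_cast [hsub2] at this
      linarith [this]
    have q3 : (Nat.choose (n + 2) (k + 1) : ℚ) * ((k : ℚ) + 1)
        = (Nat.choose (n + 2) k : ℚ) * ((n : ℚ) + 2 - k) := by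
      have := congrArg (Nat.cast : ℕ → ℚ) e3
      push_cast [hsub2] at this
      linarith [this]
    have hkq : (k : ℚ) ≤ n := by exact_mod_cast hkn
    have hd1 : ((n : ℚ) + 1 - k) ≠ 0 := by intro h; nlinarith
    have hd2 : ((n : ℚ) + 2 - k) ≠ 0 := by intro h; nlinarith
    have ha : (Nat.choose n k : ℚ)
        = (Nat.choose (n + 1) k : ℚ) * ((n : ℚ) + 1 - k) / ((n : ℚ) + 1) := by
      field_simp; linarith [q1]
    have hb : (Nat.choose (n + 1) k : ℚ)
        = (Nat.choose (n + 2) k : ℚ) * ((n : ℚ) + 2 - k) / ((n : ℚ) + 2) := by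
      field_simp; linarith [q2]
    have hd : (Nat.choose (n + 2) (k + 1) : ℚ)
        = (Nat.choose (n + 2) k : ℚ) * ((n : ℚ) + 2 - k) / ((k : ℚ) + 1) := by
      field_simp; linarith [q3]
    rw [franelG, franelG, ha, hb, hd]
    push_cast
    field_simp
    ring
  · -- edge cases k = n+1 or k = n+2
    have hcase : k = n + 1 ∨ k = n + 2 := by omega
    rcases hcase with h | h
    · subst h
      have c1 : Nat.choose n (n + 1) = 0 := Nat.choose_eq_zero_of_lt (by omega)
      have c2 : Nat.choose (n + 1) (n + 1) = 1 := Nat.choose_self _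
      have c3 : Nat.choose (n + 2) (n + 1) = n + 2 := Nat.choose_succ_self_right (n + 1)
      have c4 : Nat.choose (n + 2) (n + 1 + 1) = 1 := Nat.choose_self _
      rw [franelG, franelG, c1, c2, c3, c4]
      push_cast
      field_simp
      ring
    · subst h
      have c1 : Nat.choose n (n + 2) = 0 := Nat.choose_eq_zero_of_lt (by omega)
      have c2 : Nat.choose (n + 1) (n + 2) = 0 := Nat.choose_eq_zero_of_lt (by omega)
      have c4 : Nat.choose (n + 2) (n + 2) = 1 := Nat.choose_self _
      have c5 : Nat.choose (n + 2) (n + 2 + 1) = 0 := Nat.choose_eq_zero_of_lt (by omega)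
      rw [franelG, franelG, c1, c2, c4, c5]
      push_cast
      field_simp
      ring

theorem stmt15 (u : ℕ → ℚ)
    (hu : ∀ m : ℕ, u m = ∑ k ∈ Finset.range (m + 1), (Nat.choose m k : ℚ) ^ 3) :
    (∀ m : ℕ, 1 ≤ m → ((m : ℚ) + 1) ^ 2 * u (m + 1)
      - (7 * (m : ℚ) ^ 2 + 7 * m + 2) * u m - 8 * (m : ℚ) ^ 2 * u (m - 1) = 0) ∧
    (1 : ℚ) ^ 2 * u 1 = 2 * u 0 := by
  constructor
  · intro m hm
    obtain ⟨n, rfl⟩ : ∃ n, m = n + 1 := ⟨m - 1, by omega⟩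
    simp only [Nat.add_sub_cancel]
    have hu2 : u (n + 1 + 1) = ∑ k ∈ Finset.range (n + 3), (Nat.choose (n + 2) k : ℚ) ^ 3 := by
      rw [hu]
    have hu1 : u (n + 1) = ∑ k ∈ Finset.range (n + 3), (Nat.choose (n + 1) k : ℚ) ^ 3 := by
      rw [hu, Finset.sum_range_succ (n := n + 2),
        Nat.choose_eq_zero_of_lt (by omega : n + 1 < n + 2)]
      push_cast; ring
    have hu0 : u n = ∑ k ∈ Finset.range (n + 3), (Nat.choose n k : ℚ) ^ 3 := by
      rw [hu, Finset.sum_range_succ (n := n + 2), Finset.sum_range_succ (n := n + 1),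
        Nat.choose_eq_zero_of_lt (by omega : n < n + 1),
        Nat.choose_eq_zero_of_lt (by omega : n < n + 2)]
      push_cast; ring
    have key : ∀ k ∈ Finset.range (n + 3),
        ((n : ℚ) + 1 + 1) ^ 2 * (Nat.choose (n + 2) k : ℚ) ^ 3
          - (7 * ((n : ℚ) + 1) ^ 2 + 7 * ((n : ℚ) + 1) + 2) * (Nat.choose (n + 1) k : ℚ) ^ 3
          - 8 * ((n : ℚ) + 1) ^ 2 * (Nat.choose n k : ℚ) ^ 3
        = franelG n (k + 1) - franelG n k := by
      intro k hk
      rw [Finset.mem_range] at hk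
      have h := franel_step n k (by omega)
      calc ((n : ℚ) + 1 + 1) ^ 2 * (Nat.choose (n + 2) k : ℚ) ^ 3
          - (7 * ((n : ℚ) + 1) ^ 2 + 7 * ((n : ℚ) + 1) + 2) * (Nat.choose (n + 1) k : ℚ) ^ 3
          - 8 * ((n : ℚ) + 1) ^ 2 * (Nat.choose n k : ℚ) ^ 3
          = ((n : ℚ) + 2) ^ 2 * (Nat.choose (n + 2) k : ℚ) ^ 3
            - (7 * (n : ℚ) ^ 2 + 21 * n + 16) * (Nat.choose (n + 1) k : ℚ) ^ 3
            - 8 * ((n : ℚ) + 1) ^ 2 * (Nat.choose n k : ℚ) ^ 3 := by ring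
        _ = franelG n (k + 1) - franelG n k := h
    have expand : ((n : ℚ) + 1 + 1) ^ 2 *
          (∑ k ∈ Finset.range (n + 3), (Nat.choose (n + 2) k : ℚ) ^ 3)
        - (7 * ((n : ℚ) + 1) ^ 2 + 7 * ((n : ℚ) + 1) + 2) *
          (∑ k ∈ Finset.range (n + 3), (Nat.choose (n + 1) k : ℚ) ^ 3)
        - 8 * ((n : ℚ) + 1) ^ 2 *
          (∑ k ∈ Finset.range (n + 3), (Nat.choose n k : ℚ) ^ 3)
        = ∑ k ∈ Finset.range (n + 3), (franelG n (k + 1) - franelG n k) := by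
      rw [Finset.mul_sum, Finset.mul_sum, Finset.mul_sum, ← Finset.sum_sub_distrib,
        ← Finset.sum_sub_distrib]
      exact Finset.sum_congr rfl key
    have tele : ∑ k ∈ Finset.range (n + 3), (franelG n (k + 1) - franelG n k) = 0 := by
      rw [Finset.sum_range_sub (franelG n)]
      have g0 : franelG n 0 = 0 := by simp [franelG]
      have gtop : franelG n (n + 3) = 0 := by
        rw [franelG, Nat.choose_eq_zero_of_lt (by omega : n + 2 < n + 3)]
        push_cast; ring
      rw [g0, gtop]; ring
    push_cast
    rw [hu2, hu1, hu0, expand, tele]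
  · rw [hu 1, hu 0]
    norm_num [Finset.sum_range_succ]
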